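/- The linear map S : D(H;G) → D(H;G) defined by S(h,g) = (g⁻¹h⁻¹g, g⁻¹) is an antipode for D(H;G), i.e. ∑ S(a₍₁₎)a₍₂₎ = ε(a)1 = ∑ a₍₁₎S(a₍₂₎) for all a ∈ D(H;G), and S² = id. -/

import Mathlib

open scoped BigOperators

noncomputable section

variable {G : Type*} [Group G] [Fintype G] [DecidableEq G]

/-- For a normal subgroup `H` of `G`, the conjugate `g⁻¹ h g` as an element of `H`. -/
def conjH (H : Subgroup G) [H.Normal] (g : G) (h : H) : H :=
  ⟨g⁻¹ * (h : G) * g, by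
    simpa using Subgroup.Normal.conj_mem ‹H.Normal› (h : G) h.2 g⁻¹⟩

/-- The multiplication of `D(H;G)`, modelled on coefficient functions `H × G → ℂ`:
`(h₁,g₁)(h₂,g₂) = δ_{h₁g₁, g₁h₂} (h₁, g₁g₂)`. -/
def Dmul (H : Subgroup G) [H.Normal] (a b : H × G → ℂ) : H × G → ℂ :=
  fun p => ∑ g₁ : G, a (p.1, g₁) * b (conjH H g₁ p.1, g₁⁻¹ * p.2)

/-- The basis element `(h,g)` of `D(H;G)`. -/
def bas (H : Subgroup G) (h : H) (g : G) : H × G → ℂ :=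
  fun p => if p = (h, g) then 1 else 0

/-- The unit `∑_{h ∈ H} (h, e)` of `D(H;G)`. -/
def Done (H : Subgroup G) [Fintype H] : H × G → ℂ :=
  ∑ h : H, bas H h 1

/-- The counit `ε(h,g) = δ_{h,e}` extended linearly. -/
def Dcounit (H : Subgroup G) (a : H × G → ℂ) : ℂ := ∑ g : G, a (1, g)

/-- The coproduct `Δ(h,g) = ∑_{t ∈ H} (t,g) ⊗ (t⁻¹h, g)`, on coefficient functions:
`D(H;G) ⊗ D(H;G)` is modelled as `(H × G) × (H × G) → ℂ`. -/
def Dcomul (H : Subgroup G) (a : H × G → ℂ) : (H × G) × (H × G) → ℂ :=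
  fun p => if p.1.2 = p.2.2 then a (p.1.1 * p.2.1, p.1.2) else 0

/-- The antipode on basis elements: `S(h,g) = (g⁻¹h⁻¹g, g⁻¹)` (an involution of the basis). -/
def Sbasis (H : Subgroup G) [H.Normal] : H × G → H × G :=
  fun p => (conjH H p.2 p.1⁻¹, p.2⁻¹)

/-- The antipode `S` extended linearly (as pullback along the basis involution). -/
def Dantipode (H : Subgroup G) [H.Normal] (a : H × G → ℂ) : H × G → ℂ :=
  fun p => a (Sbasis H p)

lemma conjH_mul_inv (H : Subgroup G) [H.Normal] (g : G) (h : H) :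
    conjH H g h⁻¹ * conjH H g h = 1 := by
  apply Subtype.ext; simp [conjH]; group

lemma conjH_conjH (H : Subgroup G) [H.Normal] (g : G) (h : H) :
    conjH H g⁻¹ (conjH H g h) = h := by
  apply Subtype.ext; simp [conjH]; group

lemma Done_apply (H : Subgroup G) [Fintype H] (p : H × G) :
    Done H p = if p.2 = 1 then 1 else 0 := by
  simp only [Done, bas, Finset.sum_apply, Prod.ext_iff]
  by_cases hp : p.2 = 1 <;> simp [hp]

theorem statement4 (H : Subgroup G) [H.Normal] [Fintype H] :
    (∀ a : H × G → ℂ,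
      (fun p : H × G =>
          ∑ g₁ : G, Dcomul H a (Sbasis H (p.1, g₁), (conjH H g₁ p.1, g₁⁻¹ * p.2)))
        = Dcounit H a • Done H) ∧
    (∀ a : H × G → ℂ,
      (fun p : H × G =>
          ∑ g₁ : G, Dcomul H a ((p.1, g₁), Sbasis H (conjH H g₁ p.1, g₁⁻¹ * p.2)))
        = Dcounit H a • Done H) ∧
    (∀ a : H × G → ℂ, Dantipode H (Dantipode H a) = a) := by
  refine ⟨?_, ?_, ?_⟩
  · intro a
    funext p
    simp only [Pi.smul_apply, smul_eq_mul, Done_apply, Dcomul, Sbasis]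
    by_cases hp : p.2 = 1
    · simp only [hp, mul_one, if_pos rfl, conjH_mul_inv, Dcounit, if_true, mul_one]
      exact Fintype.sum_equiv (Equiv.inv G) _ _ (fun g => by simp)
    · have : ∀ g₁ : G, ¬ (g₁⁻¹ = g₁⁻¹ * p.2) := fun g₁ h => hp (by
        exact mul_left_cancel (h.symm.trans (mul_one _).symm))
      simp [this, hp]
  · intro a
    funext p
    simp only [Pi.smul_apply, smul_eq_mul, Done_apply, Dcomul, Sbasis]
    by_cases hp : p.2 = 1
    · simp only [hp, mul_one, if_true, mul_one, Dcounit]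
      refine Finset.sum_congr rfl fun g₁ _ => ?_
      rw [inv_inv, if_pos rfl]
      congr 1
      refine Prod.ext ?_ rfl
      rw [show ((conjH H g₁ p.1)⁻¹ : H) = conjH H g₁ p.1⁻¹ from
        Subtype.ext (by simp [conjH]; group), conjH_conjH]
      exact mul_inv_cancel p.1
    · have : ∀ g₁ : G, ¬ (g₁ = (g₁⁻¹ * p.2)⁻¹) := fun g₁ h => hp (by
        rw [mul_inv_rev, inv_inv] at h
        nth_rewrite 1 [← one_mul g₁] at h
        have h2 := mul_right_cancel h
        rw [← inv_inj, inv_one, inv_inv] at h2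
        exact h2.symm)
      simp [this, hp]
  · intro a
    funext p
    simp only [Dantipode, Sbasis, inv_inv]
    congr 1
    refine Prod.ext ?_ rfl
    rw [show ((conjH H p.2 p.1⁻¹)⁻¹ : H) = conjH H p.2 p.1 from
      Subtype.ext (by simp [conjH]; group)]
    exact conjH_conjH H p.2 p.1
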